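/- Let A be a real square matrix with all entries strictly positive, and let v be an eigenvector of A corresponding to the eigenvalue of maximum modulus (the Perron eigenvalue), normalized to have positive first nonzero coordinate. Then every component of v is strictly positive. -/

import Mathlib

open Matrix Polynomial

lemma pf_mem_spectrum_iff_det {n : ℕ} (M : Matrix (Fin n) (Fin n) ℂ) (lam : ℂ) :
    lam ∈ spectrum ℂ M ↔ (Matrix.diagonal (fun _ => lam) - M).det = 0 := by
  rw [spectrum.mem_iff, Matrix.isUnit_iff_isUnit_det, isUnit_iff_ne_zero, not_ne_iff,
    Matrix.algebraMap_eq_diagonal]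
  norm_num [Pi.algebraMap_def]

lemma pf_charpoly_eval {n : ℕ} (M : Matrix (Fin n) (Fin n) ℂ) (lam : ℂ) :
    (Matrix.charpoly M).eval lam = (Matrix.diagonal (fun _ => lam) - M).det := by
  rw [Matrix.charpoly, eval_det, Matrix.matPolyEquiv_charmatrix]
  simp [Matrix.scalar_apply]

lemma pf_eigvec_of_mem_spectrum {n : ℕ} (M : Matrix (Fin n) (Fin n) ℂ) (lam : ℂ)
    (h : lam ∈ spectrum ℂ M) : ∃ w : Fin n → ℂ, w ≠ 0 ∧ M.mulVec w = lam • w := by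
  rw [pf_mem_spectrum_iff_det] at h
  obtain ⟨w, hw0, hw⟩ := (Matrix.exists_mulVec_eq_zero_iff).2 h
  refine ⟨w, hw0, ?_⟩
  funext i
  have := congrFun hw i
  simp [Matrix.sub_mulVec, Matrix.mulVec_diagonal, sub_eq_zero] at this
  simpa [Pi.smul_apply, smul_eq_mul] using this.symm

lemma pf_root_mem_spectrum {n : ℕ} (M : Matrix (Fin n) (Fin n) ℂ) (r : ℂ)
    (h : r ∈ (Matrix.charpoly M).roots) : r ∈ spectrum ℂ M := by
  rw [Polynomial.mem_roots'] at h
  rw [pf_mem_spectrum_iff_det, ← pf_charpoly_eval]; exact h.2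

lemma pf_trace_pow_bound {n : ℕ} (A : Matrix (Fin n) (Fin n) ℝ) (r : ℝ) (hr : 0 ≤ r)
    (hmax : ∀ (μc : ℂ) (w : Fin n → ℂ), w ≠ 0 →
      (A.map (Complex.ofReal)).mulVec w = μc • w → ‖μc‖ ≤ r)
    (k : ℕ) (hk : 0 < k) : (A ^ k).trace ≤ n * r ^ k := by
  set M : Matrix (Fin n) (Fin n) ℂ := A.map (Complex.ofReal) with hM
  -- every element of the spectrum of M^k has norm ≤ r^k
  have hspec : ∀ lam ∈ spectrum ℂ (M ^ k), ‖lam‖ ≤ r ^ k := by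
    intro lam hlam
    have hdeg : 0 < (X ^ k : ℂ[X]).degree := by
      rw [Polynomial.degree_X_pow]; exact_mod_cast hk
    have hmap := spectrum.map_polynomial_aeval_of_degree_pos (𝕜 := ℂ) M (X ^ k) hdeg
    rw [map_pow, Polynomial.aeval_X] at hmap
    rw [hmap] at hlam
    obtain ⟨z, hz, rfl⟩ := hlam
    obtain ⟨w, hw0, hw⟩ := pf_eigvec_of_mem_spectrum M z hz
    have hz' : ‖z‖ ≤ r := hmax z w hw0 hw
    simp only [Polynomial.eval_pow, Polynomial.eval_X, norm_pow]
    exact pow_le_pow_left₀ (norm_nonneg z) hz' k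
  -- trace of M^k equals ofReal of trace of A^k
  have hMk : M ^ k = ((A ^ k).map (Complex.ofReal)) := by
    have := map_pow (Complex.ofRealHom.mapMatrix) A k
    rw [RingHom.mapMatrix_apply, RingHom.mapMatrix_apply] at this; exact this.symm
  have htr : (M ^ k).trace = ((A ^ k).trace : ℂ) := by
    rw [hMk]; simp [Matrix.trace, Matrix.map_apply]
  -- trace = sum of roots of charpoly
  have hsum := Matrix.trace_eq_sum_roots_charpoly (M ^ k)
  have hcard : (Matrix.charpoly (M ^ k)).roots.card ≤ n := by
    have := (Matrix.charpoly (M ^ k)).card_roots'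
    rwa [Matrix.charpoly_natDegree_eq_dim, Fintype.card_fin] at this
  have hnorm : ‖(M ^ k).trace‖ ≤ n * r ^ k := by
    rw [hsum]
    calc ‖(Matrix.charpoly (M ^ k)).roots.sum‖
        ≤ ((Matrix.charpoly (M ^ k)).roots.map (fun z => ‖z‖)).sum :=
          norm_multiset_sum_le _
      _ ≤ ((Matrix.charpoly (M ^ k)).roots.map (fun z => ‖z‖)).card • (r ^ k) := by
          apply Multiset.sum_le_card_nsmul
          intro x hx
          obtain ⟨z, hz, rfl⟩ := Multiset.mem_map.1 hx
          exact hspec z (pf_root_mem_spectrum _ _ hz)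
      _ ≤ n * r ^ k := by
          rw [Multiset.card_map, nsmul_eq_mul]
          exact mul_le_mul_of_nonneg_right (by exact_mod_cast hcard) (by positivity)
  calc (A ^ k).trace ≤ |(A ^ k).trace| := le_abs_self _
    _ = ‖((A ^ k).trace : ℂ)‖ := by rw [Complex.norm_real, Real.norm_eq_abs]
    _ = ‖(M ^ k).trace‖ := by rw [htr]
    _ ≤ n * r ^ k := hnorm

lemma pf_pow_entry_nonneg {n : ℕ} (A : Matrix (Fin n) (Fin n) ℝ) (hA : ∀ i j, 0 ≤ A i j) :
    ∀ k i j, 0 ≤ (A ^ k) i j := by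
  intro k
  induction k with
  | zero => intro i j; rw [pow_zero]; by_cases h : i = j <;> simp [Matrix.one_apply, h]
  | succ k ih =>
    intro i j
    rw [pow_succ, Matrix.mul_apply]
    exact Finset.sum_nonneg fun l _ => mul_nonneg (ih i l) (hA l j)

lemma pf_pow_mulVec_lower {n : ℕ} (A : Matrix (Fin n) (Fin n) ℝ) (hA : ∀ i j, 0 ≤ A i j)
    (w : Fin n → ℝ) (hw : ∀ i, 0 ≤ w i) (c : ℝ) (hc : 0 ≤ c)
    (h : ∀ i, c * w i ≤ A.mulVec w i) :
    ∀ k i, c ^ k * w i ≤ (A ^ k).mulVec w i := by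
  intro k
  induction k with
  | zero => intro i; simp [Matrix.mulVec_one]
  | succ k ih =>
    intro i
    have h1 : (A ^ (k+1)).mulVec w = A.mulVec ((A ^ k).mulVec w) := by
      rw [Matrix.mulVec_mulVec, ← pow_succ']
    rw [h1]
    have h2 : ∀ j, c ^ k * (A.mulVec w) j ≤ A.mulVec ((A ^ k).mulVec w) j := by
      intro j
      simp only [Matrix.mulVec, dotProduct]
      rw [Finset.mul_sum]
      apply Finset.sum_le_sum
      intro l _
      rw [mul_left_comm]
      exact mul_le_mul_of_nonneg_left (ih l) (hA j l)
    calc c ^ (k+1) * w i = c ^ k * (c * w i) := by ring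
      _ ≤ c ^ k * (A.mulVec w) i :=
          mul_le_mul_of_nonneg_left (h i) (pow_nonneg hc k)
      _ ≤ A.mulVec ((A ^ k).mulVec w) i := h2 i

theorem perron_eigenvector_positive {n : ℕ}
    (A : Matrix (Fin n) (Fin n) ℝ) (hA : ∀ i j, 0 < A i j)
    (μ : ℝ) (v : Fin n → ℝ) (hv : v ≠ 0)
    (heig : A.mulVec v = μ • v)
    -- μ is the eigenvalue of maximum modulus: every complex eigenvalue of A
    -- has modulus at most |μ|
    (hmax : ∀ (μc : ℂ) (w : Fin n → ℂ), w ≠ 0 →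
      (A.map (Complex.ofReal)).mulVec w = μc • w → ‖μc‖ ≤ |μ|)
    -- normalization: the first nonzero coordinate of v is positive
    (hnorm : ∃ i, 0 < v i ∧ ∀ j, j < i → v j = 0) :
    ∀ i, 0 < v i := by

  rcases Nat.eq_zero_or_pos n with hn | hn
  · intro i; exact absurd i.isLt (by omega)
  haveI : Nonempty (Fin n) := ⟨⟨0, hn⟩⟩
  set u : Fin n → ℝ := fun i => |v i| with hu
  have hu0 : ∀ i, 0 ≤ u i := fun i => abs_nonneg _
  obtain ⟨j₀, hj₀⟩ : ∃ j, v j ≠ 0 := Function.ne_iff.mp hv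
  have huj₀ : 0 < u j₀ := abs_pos.2 hj₀
  have hmv : ∀ (x : Fin n → ℝ) i, A.mulVec x i = ∑ j, A i j * x j := by
    intro x i; simp [Matrix.mulVec, dotProduct]
  have hposvec : ∀ (x : Fin n → ℝ), (∀ i, 0 ≤ x i) → ∀ (j : Fin n), 0 < x j →
      ∀ i, 0 < A.mulVec x i := by
    intro x hx j hj i
    rw [hmv]
    exact Finset.sum_pos' (fun l _ => mul_nonneg (hA i l).le (hx l))
      ⟨j, Finset.mem_univ j, mul_pos (hA i j) hj⟩
  have hineq : ∀ i, |μ| * u i ≤ A.mulVec u i := by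
    intro i
    have h1 : |μ| * u i = |(A.mulVec v) i| := by
      rw [heig]; simp [abs_mul, hu]
    rw [h1, hmv u i]
    calc |(A.mulVec v) i| ≤ ∑ j, |A i j * v j| := by
          rw [hmv v i]; exact Finset.abs_sum_le_sum_abs _ _
      _ = ∑ j, A i j * u j := by
          apply Finset.sum_congr rfl
          intro j _
          rw [abs_mul, abs_of_pos (hA i j)]
  -- Key step: the triangle inequality is an equality
  have hkey : ∀ i, A.mulVec u i = |μ| * u i := by
    by_contra hne
    push_neg at hne
    have hstrict : ∃ i₀, |μ| * u i₀ < A.mulVec u i₀ := by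
      by_contra hq
      push_neg at hq
      obtain ⟨i, hi⟩ := hne
      exact hi (le_antisymm (hq i) (hineq i))
    obtain ⟨i₀, hi₀⟩ := hstrict
    set d : Fin n → ℝ := fun i => A.mulVec u i - |μ| * u i with hd
    have hd0 : ∀ i, 0 ≤ d i := fun i => sub_nonneg.2 (hineq i)
    have hdi₀ : 0 < d i₀ := sub_pos.2 hi₀
    set w : Fin n → ℝ := A.mulVec u with hw
    have hwpos : ∀ i, 0 < w i := hposvec u hu0 j₀ huj₀
    set g : Fin n → ℝ := A.mulVec d with hg
    have hgpos : ∀ i, 0 < g i := hposvec d hd0 i₀ hdi₀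
    have hAw : ∀ i, A.mulVec w i = |μ| * w i + g i := by
      intro i
      have h1 : w i = ∑ j, A i j * u j := hmv u i
      have h2 : g i = ∑ j, A i j * d j := hmv d i
      have h3 : ∀ j, w j = |μ| * u j + d j := by
        intro j
        show w j = |μ| * u j + (w j - |μ| * u j)
        ring
      rw [hmv w i, h1, h2, Finset.mul_sum, ← Finset.sum_add_distrib]
      apply Finset.sum_congr rfl
      intro j _
      rw [h3 j]
      ring
    obtain ⟨i₁, -, hmin⟩ := Finset.exists_min_image Finset.univ (fun i => g i / w i)
      Finset.univ_nonempty
    set c : ℝ := |μ| + g i₁ / w i₁ with hc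
    have hcgt : |μ| < c := lt_add_of_pos_right _ (div_pos (hgpos i₁) (hwpos i₁))
    have hcpos : 0 < c := lt_of_le_of_lt (abs_nonneg μ) hcgt
    have hc0 : 0 ≤ c := hcpos.le
    have hcw : ∀ i, c * w i ≤ A.mulVec w i := by
      intro i
      rw [hAw i]
      have h2 : g i₁ / w i₁ * w i ≤ g i :=
        (le_div_iff₀ (hwpos i)).1 (hmin i (Finset.mem_univ i))
      rw [hc, add_mul]
      exact (add_le_add_iff_left _).2 h2
    have hlow := pf_pow_mulVec_lower A (fun i j => (hA i j).le) w (fun i => (hwpos i).le)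
      c hc0 hcw
    obtain ⟨p, -, hp⟩ := Finset.exists_min_image (Finset.univ : Finset (Fin n × Fin n))
      (fun q => A q.1 q.2) Finset.univ_nonempty
    obtain ⟨im, -, him⟩ := Finset.exists_min_image Finset.univ w Finset.univ_nonempty
    obtain ⟨iW, -, hiW⟩ := Finset.exists_max_image Finset.univ w Finset.univ_nonempty
    have ha0 : 0 < A p.1 p.2 := hA p.1 p.2
    set δ : ℝ := A p.1 p.2 * w im / w iW with hδ
    have hδ0 : 0 < δ := div_pos (mul_pos ha0 (hwpos im)) (hwpos iW)
    have htrlow : ∀ k : ℕ, δ * c ^ k ≤ (A ^ (k+1)).trace := by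
      intro k
      have hAk0 : ∀ i j, 0 ≤ (A ^ k) i j := pf_pow_entry_nonneg A (fun i j => (hA i j).le) k
      have hrowsum : ∀ i, c ^ k * w i / w iW ≤ ∑ j, (A ^ k) i j := by
        intro i
        rw [div_le_iff₀ (hwpos iW)]
        calc c ^ k * w i ≤ (A ^ k).mulVec w i := hlow k i
          _ = ∑ j, (A ^ k) i j * w j := by
              simp [Matrix.mulVec, dotProduct]
          _ ≤ ∑ j, (A ^ k) i j * w iW := by
              apply Finset.sum_le_sum
              intro j _
              exact mul_le_mul_of_nonneg_left (hiW j (Finset.mem_univ j)) (hAk0 i j)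
          _ = (∑ j, (A ^ k) i j) * w iW := by rw [Finset.sum_mul]
      have hdiag : δ * c ^ k ≤ (A ^ (k+1)) im im := by
        have h3 : (A ^ (k+1)) im im = ∑ j, (A ^ k) im j * A j im := by
          rw [pow_succ, Matrix.mul_apply]
        rw [h3]
        have h4 : ∀ j, A p.1 p.2 * (A ^ k) im j ≤ (A ^ k) im j * A j im := by
          intro j
          rw [mul_comm ((A ^ k) im j) (A j im)]
          exact mul_le_mul_of_nonneg_right (hp (j, im) (Finset.mem_univ _)) (hAk0 im j)
        have h5 : δ * c ^ k = A p.1 p.2 * (c ^ k * w im / w iW) := by rw [hδ]; ring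
        rw [h5]
        calc A p.1 p.2 * (c ^ k * w im / w iW)
            ≤ A p.1 p.2 * ∑ j, (A ^ k) im j :=
              mul_le_mul_of_nonneg_left (hrowsum im) ha0.le
          _ = ∑ j, A p.1 p.2 * (A ^ k) im j := Finset.mul_sum _ _ _
          _ ≤ ∑ j, (A ^ k) im j * A j im := Finset.sum_le_sum (fun j _ => h4 j)
      calc δ * c ^ k ≤ (A ^ (k+1)) im im := hdiag
        _ ≤ ∑ i, (A ^ (k+1)) i i :=
            Finset.single_le_sum
              (fun i _ => pf_pow_entry_nonneg A (fun i j => (hA i j).le) (k+1) i i)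
              (Finset.mem_univ im)
        _ = (A ^ (k+1)).trace := rfl
    -- contradiction via the spectral upper bound
    have hrat : |μ| / c < 1 := (div_lt_one hcpos).2 hcgt
    have hB : (0:ℝ) ≤ (n : ℝ) * |μ| := by positivity
    have hε : 0 < δ / ((n : ℝ) * |μ| + 1) := div_pos hδ0 (by linarith)
    obtain ⟨k, hk⟩ := exists_pow_lt_of_lt_one hε hrat
    have h6 := htrlow k
    have h7 := pf_trace_pow_bound A |μ| (abs_nonneg μ) hmax (k+1) (Nat.succ_pos k)
    have h8 : δ * c ^ k ≤ (n : ℝ) * (|μ| * |μ| ^ k) := by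
      rw [pow_succ' (|μ|) k] at h7
      linarith
    have h9 : |μ| ^ k = (|μ| / c) ^ k * c ^ k := by
      rw [div_pow, div_mul_cancel₀]
      exact pow_ne_zero k hcpos.ne'
    have hck : 0 < c ^ k := pow_pos hcpos k
    have htk : 0 ≤ (|μ| / c) ^ k := pow_nonneg (by positivity) k
    have hk' : (|μ| / c) ^ k * ((n : ℝ) * |μ| + 1) < δ :=
      (lt_div_iff₀ (by linarith)).1 hk
    have hk'' : (|μ| / c) ^ k * ((n : ℝ) * |μ| + 1) * c ^ k < δ * c ^ k :=
      mul_lt_mul_of_pos_right hk' hck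
    nlinarith [mul_nonneg htk hck.le]
  -- Equality case: all |v i| > 0
  have hupos : ∀ i, 0 < u i := by
    intro i
    have h1 : 0 < A.mulVec u i := hposvec u hu0 j₀ huj₀ i
    rw [hkey i] at h1
    rcases mul_pos_iff.1 h1 with ⟨-, h⟩ | ⟨-, h⟩
    · exact h
    · exact absurd h (not_lt.2 (hu0 i))
  have hvne : ∀ i, v i ≠ 0 := fun i => abs_ne_zero.1 (hupos i).ne'
  obtain ⟨i0, hi0pos, -⟩ := hnorm
  intro i
  by_contra hle
  push_neg at hle
  have hvi : v i < 0 := lt_of_le_of_ne hle (hvne i)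
  have hrow : |∑ j, A i0 j * v j| = ∑ j, A i0 j * u j := by
    have h1 : (A.mulVec v) i0 = μ * v i0 := by rw [heig]; rfl
    have h2 : |μ * v i0| = |μ| * u i0 := by rw [abs_mul]
    rw [← hmv v i0, h1, h2, ← hkey i0, hmv u i0]
  have hlt1 : ∑ j, A i0 j * v j < ∑ j, A i0 j * u j := by
    apply Finset.sum_lt_sum
    · intro j _
      exact mul_le_mul_of_nonneg_left (le_abs_self _) (hA i0 j).le
    · refine ⟨i, Finset.mem_univ i, ?_⟩
      apply mul_lt_mul_of_pos_left _ (hA i0 i)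
      calc v i < 0 := hvi
        _ < |v i| := abs_pos.2 (hvne i)
  have hlt2 : -∑ j, A i0 j * v j < ∑ j, A i0 j * u j := by
    rw [← Finset.sum_neg_distrib]
    apply Finset.sum_lt_sum
    · intro j _
      rw [← mul_neg]
      exact mul_le_mul_of_nonneg_left (neg_le_abs _) (hA i0 j).le
    · refine ⟨i0, Finset.mem_univ i0, ?_⟩
      rw [← mul_neg]
      apply mul_lt_mul_of_pos_left _ (hA i0 i0)
      calc -v i0 < 0 := neg_neg_iff_pos.2 hi0pos
        _ < |v i0| := abs_pos.2 (hvne i0)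
  have hfin : |∑ j, A i0 j * v j| < ∑ j, A i0 j * u j :=
    abs_lt.2 ⟨by linarith, hlt1⟩
  exact absurd hrow (ne_of_lt hfin)
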